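/- Let A, B, C, D ∈ ℝ² be four points, no three of which are collinear, forming a convex quadrilateral with vertices in cyclic order A, D, C, B (equivalently: the open diagonal segment from A to C and the open diagonal segment from D to B intersect). Define the bilinear interpolation map φ : [0,1] × [0,1] → ℝ² by φ(x,y) = (1−y)·((1−x)·A + x·D) + y·((1−x)·B + x·C). Then φ is injective on [0,1] × [0,1] and its image is exactly the quadrilateral, i.e. φ([0,1]²) = convexHull{A, B, C, D}. In particular, the normalized coordinate system (x,y) inside a non-degenerate convex quadrilateral determines each point of the quadrilateral uniquely. -/

import Mathlib

lemma collinear_of_det_zero (A B D : ℝ × ℝ)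
    (h : (B.1-A.1)*(D.2-A.2) - (B.2-A.2)*(D.1-A.1) = 0) :
    Collinear ℝ ({A, B, D} : Set (ℝ × ℝ)) := by
  rw [collinear_iff_of_mem (Set.mem_insert A {B, D})]
  by_cases hBA : B = A
  · refine ⟨D - A, ?_⟩
    rintro p (rfl | rfl | rfl)
    · exact ⟨0, by simp⟩
    · exact ⟨0, by simp [hBA]⟩
    · exact ⟨1, by simp⟩
  · refine ⟨B - A, ?_⟩
    have key : ∀ p : ℝ × ℝ,
        (B.1-A.1)*(p.2-A.2) - (B.2-A.2)*(p.1-A.1) = 0 → ∃ r : ℝ, p = r • (B - A) +ᵥ A := by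
      intro p hp
      by_cases h1 : B.1 - A.1 = 0
      · have h2 : B.2 - A.2 ≠ 0 := fun h2 => hBA (by ext <;> [linarith; linarith])
        refine ⟨(p.2 - A.2)/(B.2 - A.2), ?_⟩
        have hp1 : p.1 - A.1 = 0 := by
          have h3 : (B.2 - A.2) * (p.1 - A.1) = 0 := by linear_combination (p.2 - A.2)*h1 - hp
          rcases mul_eq_zero.mp h3 with h' | h'
          · exact absurd h' h2
          · exact h'
        ext
        · show p.1 = (p.2 - A.2)/(B.2 - A.2) * (B.1 - A.1) + A.1
          rw [h1]; simp; linarith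
        · show p.2 = (p.2 - A.2)/(B.2 - A.2) * (B.2 - A.2) + A.2
          field_simp
          ring
      · refine ⟨(p.1 - A.1)/(B.1 - A.1), ?_⟩
        ext
        · show p.1 = (p.1 - A.1)/(B.1 - A.1) * (B.1 - A.1) + A.1
          field_simp
          ring
        · show p.2 = (p.1 - A.1)/(B.1 - A.1) * (B.2 - A.2) + A.2
          field_simp
          nlinarith [hp]
    intro p hp
    rcases hp with rfl | hp'
    · exact ⟨0, by simp⟩
    · rcases hp' with rfl | rfl
      · exact key p (by ring)
      · exact key p h

lemma interp_pos {z c d : ℝ} (hz0 : 0 ≤ z) (hz1 : z ≤ 1) (hc : 0 < c) (hd : 0 < d) :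
    0 < (1-z)*c + z*d := by
  rcases le_total c d with h | h
  · nlinarith [mul_nonneg hz0 (sub_nonneg.2 h)]
  · nlinarith [mul_nonneg (sub_nonneg.2 hz1) (sub_nonneg.2 h)]

set_option maxHeartbeats 1600000 in
theorem bilinear_coordinates_of_convex_quadrilateral
    (A B C D : ℝ × ℝ)
    (hABC : ¬Collinear ℝ ({A, B, C} : Set (ℝ × ℝ)))
    (hABD : ¬Collinear ℝ ({A, B, D} : Set (ℝ × ℝ)))
    (hACD : ¬Collinear ℝ ({A, C, D} : Set (ℝ × ℝ)))
    (hBCD : ¬Collinear ℝ ({B, C, D} : Set (ℝ × ℝ)))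
    (hconv : (openSegment ℝ A C ∩ openSegment ℝ D B).Nonempty)
    (φ : ℝ × ℝ → ℝ × ℝ)
    (hφ : ∀ x y : ℝ, φ (x, y) =
      (1 - y) • ((1 - x) • A + x • D) + y • ((1 - x) • B + x • C)) :
    Set.InjOn φ (Set.Icc (0 : ℝ) 1 ×ˢ Set.Icc (0 : ℝ) 1) ∧
      φ '' (Set.Icc (0 : ℝ) 1 ×ˢ Set.Icc (0 : ℝ) 1) =
        convexHull ℝ ({A, B, C, D} : Set (ℝ × ℝ)) := by
  obtain ⟨z, hzAC, hzDB⟩ := hconv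
  obtain ⟨a, s, ha, hs, has, hzs⟩ := hzAC
  obtain ⟨a', t, ha', ht, hat, hzt⟩ := hzDB
  have hs1 : s < 1 := by linarith
  have ht1 : t < 1 := by linarith
  have hE := hzs.trans hzt.symm
  have ha2 : a = 1 - s := by linarith
  have ha2' : a' = 1 - t := by linarith
  have hE1 : (1-s)*A.1 + s*C.1 = (1-t)*D.1 + t*B.1 := by
    have h := congrArg Prod.fst hE
    simp only [Prod.fst_add, Prod.smul_fst, smul_eq_mul] at h
    linear_combination h - A.1*ha2 + D.1*ha2'
  have hE2 : (1-s)*A.2 + s*C.2 = (1-t)*D.2 + t*B.2 := by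
    have h := congrArg Prod.snd hE
    simp only [Prod.snd_add, Prod.smul_snd, smul_eq_mul] at h
    linear_combination h - A.2*ha2 + D.2*ha2'
  have hk : (B.1-A.1)*(D.2-A.2) - (B.2-A.2)*(D.1-A.1) ≠ 0 :=
    fun h => hABD (collinear_of_det_zero A B D h)
  constructor
  · -- Injectivity
    rintro ⟨x, y⟩ hxy ⟨x', y'⟩ hxy' heq
    obtain ⟨hx, hy⟩ := hxy
    obtain ⟨hx', hy'⟩ := hxy'
    obtain ⟨hx0, hx1⟩ := Set.mem_Icc.mp hx
    obtain ⟨hy0, hy1⟩ := Set.mem_Icc.mp hy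
    obtain ⟨hx0', hx1'⟩ := Set.mem_Icc.mp hx'
    obtain ⟨hy0', hy1'⟩ := Set.mem_Icc.mp hy'
    rw [hφ x y, hφ x' y'] at heq
    have g1 : (1-y)*((1-x)*A.1 + x*D.1) + y*((1-x)*B.1 + x*C.1)
        = (1-y')*((1-x')*A.1 + x'*D.1) + y'*((1-x')*B.1 + x'*C.1) := by
      have h := congrArg Prod.fst heq
      simpa only [Prod.fst_add, Prod.smul_fst, smul_eq_mul] using h
    have g2 : (1-y)*((1-x)*A.2 + x*D.2) + y*((1-x)*B.2 + x*C.2)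
        = (1-y')*((1-x')*A.2 + x'*D.2) + y'*((1-x')*B.2 + x'*C.2) := by
      have h := congrArg Prod.snd heq
      simpa only [Prod.snd_add, Prod.smul_snd, smul_eq_mul] using h
    have hc1 : (s*(x-x') + (x*y-x'*y')*(1-t-s)) *
        ((B.1-A.1)*(D.2-A.2) - (B.2-A.2)*(D.1-A.1)) = 0 := by
      linear_combination (s*(B.1-A.1))*g2 - (s*(B.2-A.2))*g1
        - ((x*y-x'*y')*(B.1-A.1))*hE2 + ((x*y-x'*y')*(B.2-A.2))*hE1
    have hc2 : (s*(y-y') + (x*y-x'*y')*(t-s)) *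
        ((B.1-A.1)*(D.2-A.2) - (B.2-A.2)*(D.1-A.1)) = 0 := by
      linear_combination (s*(D.2-A.2))*g1 - (s*(D.1-A.1))*g2
        - ((x*y-x'*y')*(D.2-A.2))*hE1 + ((x*y-x'*y')*(D.1-A.1))*hE2
    have hc1' : s*(x-x') + (x*y-x'*y')*(1-t-s) = 0 := by
      rcases mul_eq_zero.mp hc1 with h | h
      · exact h
      · exact absurd h hk
    have hc2' : s*(y-y') + (x*y-x'*y')*(t-s) = 0 := by
      rcases mul_eq_zero.mp hc2 with h | h
      · exact h
      · exact absurd h hk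
    have hP : (x*y - x'*y') * (s - x*(s-t) - y'*(s+t-1)) = 0 := by
      linear_combination x*hc2' + y'*hc1'
    have hg : 0 < s - x*(s-t) - y'*(s+t-1) := by
      have h1 := interp_pos hx0 hx1 hs ht
      have h2 := interp_pos hx0 hx1 (show (0:ℝ) < 1-t by linarith) (show (0:ℝ) < 1-s by linarith)
      have h3 := interp_pos hy0' hy1' h1 h2
      linarith [h3]
    have hP0 : x*y - x'*y' = 0 := by
      rcases mul_eq_zero.mp hP with h | h
      · exact h
      · linarith
    have hxx : x = x' := by
      have h : s*(x-x') = 0 := by linear_combination hc1' - (1-t-s)*hP0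
      rcases mul_eq_zero.mp h with h' | h'
      · exact absurd h' (ne_of_gt hs)
      · linarith
    have hyy : y = y' := by
      have h : s*(y-y') = 0 := by linear_combination hc2' - (t-s)*hP0
      rcases mul_eq_zero.mp h with h' | h'
      · exact absurd h' (ne_of_gt hs)
      · linarith
    rw [hxx, hyy]
  · -- Image
    ext p
    constructor
    · rintro ⟨⟨x, y⟩, hmem, rfl⟩
      obtain ⟨hxm, hym⟩ := hmem
      obtain ⟨hx0, hx1⟩ := Set.mem_Icc.mp hxm
      obtain ⟨hy0, hy1⟩ := Set.mem_Icc.mp hym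
      rw [hφ]
      have hcv : Convex ℝ (convexHull ℝ ({A,B,C,D} : Set (ℝ×ℝ))) := convex_convexHull ℝ _
      have hA : A ∈ convexHull ℝ ({A,B,C,D} : Set (ℝ×ℝ)) := subset_convexHull ℝ _ (by simp)
      have hB : B ∈ convexHull ℝ ({A,B,C,D} : Set (ℝ×ℝ)) := subset_convexHull ℝ _ (by simp)
      have hC : C ∈ convexHull ℝ ({A,B,C,D} : Set (ℝ×ℝ)) := subset_convexHull ℝ _ (by simp)
      have hD : D ∈ convexHull ℝ ({A,B,C,D} : Set (ℝ×ℝ)) := subset_convexHull ℝ _ (by simp)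
      have hR := hcv hA hD (by linarith : (0:ℝ) ≤ 1-x) hx0 (by ring)
      have hQ := hcv hB hC (by linarith : (0:ℝ) ≤ 1-x) hx0 (by ring)
      exact hcv hR hQ (by linarith : (0:ℝ) ≤ 1-y) hy0 (by ring)
    · intro hp
      rw [show ({A,B,C,D} : Set (ℝ×ℝ)) = insert A {B,C,D} from rfl,
        convexHull_insert (Set.insert_nonempty _ _), mem_convexJoin] at hp
      obtain ⟨A', hA', q, hq, hpseg⟩ := hp
      rw [Set.mem_singleton_iff] at hA'
      rw [hA'] at hpseg
      rw [show ({B,C,D} : Set (ℝ×ℝ)) = insert B {C,D} from rfl,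
        convexHull_insert (Set.insert_nonempty _ _), mem_convexJoin] at hq
      obtain ⟨B', hB', r, hr, hqseg⟩ := hq
      rw [Set.mem_singleton_iff] at hB'
      rw [hB'] at hqseg
      rw [convexHull_pair] at hr
      obtain ⟨c3, d3, hc3, hd3, hcd3, hr_eq⟩ := hr
      obtain ⟨c2, d2, hc2, hd2, hcd2, hq_eq⟩ := hqseg
      obtain ⟨c1, d1, hc1, hd1, hcd1, hp_eq⟩ := hpseg
      obtain ⟨be, ga, de, hbe, hga, hde, hal, hp1, hp2⟩ :
          ∃ be ga de : ℝ, 0 ≤ be ∧ 0 ≤ ga ∧ 0 ≤ de ∧ 0 ≤ 1-be-ga-de ∧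
            p.1 = (1-be-ga-de)*A.1 + be*B.1 + ga*C.1 + de*D.1 ∧
            p.2 = (1-be-ga-de)*A.2 + be*B.2 + ga*C.2 + de*D.2 := by
        refine ⟨d1*c2, d1*d2*c3, d1*d2*d3, mul_nonneg hd1 hc2,
          mul_nonneg (mul_nonneg hd1 hd2) hc3, mul_nonneg (mul_nonneg hd1 hd2) hd3, ?_, ?_, ?_⟩
        · have hq1 : 1 - d1*c2 - d1*d2*c3 - d1*d2*d3 = c1 := by
            linear_combination -hcd1 - d1*hcd2 - d1*d2*hcd3
          rw [hq1]; exact hc1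
        · have e1 := congrArg Prod.fst hp_eq
          have e2 := congrArg Prod.fst hq_eq
          have e3 := congrArg Prod.fst hr_eq
          simp only [Prod.fst_add, Prod.smul_fst, smul_eq_mul] at e1 e2 e3
          linear_combination -e1 - d1*e2 - d1*d2*e3 + A.1*hcd1 + A.1*d1*hcd2 + A.1*d1*d2*hcd3
        · have e1 := congrArg Prod.snd hp_eq
          have e2 := congrArg Prod.snd hq_eq
          have e3 := congrArg Prod.snd hr_eq
          simp only [Prod.snd_add, Prod.smul_snd, smul_eq_mul] at e1 e2 e3
          linear_combination -e1 - d1*e2 - d1*d2*e3 + A.2*hcd1 + A.2*d1*hcd2 + A.2*d1*d2*hcd3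
      set F : ℝ → ℝ := fun w =>
        ((1-w)*(B.1-A.1) + w*(C.1-D.1)) * (p.2 - ((1-w)*A.2 + w*D.2)) -
        ((1-w)*(B.2-A.2) + w*(C.2-D.2)) * (p.1 - ((1-w)*A.1 + w*D.1)) with hFdef
      have hFcont : ContinuousOn F (Set.uIcc (0:ℝ) 1) := by
        apply Continuous.continuousOn
        rw [hFdef]
        fun_prop
      have hF0 : s * F 0 = ((B.1-A.1)*(D.2-A.2) - (B.2-A.2)*(D.1-A.1)) * (ga*(1-t) + de*s) := by
        simp only [hFdef]
        linear_combination (s*(B.1-A.1))*hp2 - (s*(B.2-A.2))*hp1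
          + (ga*(B.1-A.1))*hE2 - (ga*(B.2-A.2))*hE1
      have hF1 : s^2 * F 1 = -(((B.1-A.1)*(D.2-A.2) - (B.2-A.2)*(D.1-A.1))*s)
          * (be*(1-s) + (1-be-ga-de)*t) := by
        simp only [hFdef]
        linear_combination
          (s*(p.2-A.2-(D.2-A.2)) - ga*((1-t-s)*(D.2-A.2)+t*(B.2-A.2)))*hE1
          + (ga*((1-t-s)*(D.1-A.1)+t*(B.1-A.1)) - s*(p.1-A.1-(D.1-A.1)))*hE2
          + (s*((1-t-s)*(D.1-A.1)+t*(B.1-A.1)))*hp2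
          - (s*((1-t-s)*(D.2-A.2)+t*(B.2-A.2)))*hp1
      have hc0 : 0 ≤ ga*(1-t) + de*s :=
        add_nonneg (mul_nonneg hga (by linarith)) (mul_nonneg hde hs.le)
      have hc1n : 0 ≤ be*(1-s) + (1-be-ga-de)*t :=
        add_nonneg (mul_nonneg hbe (by linarith)) (mul_nonneg hal ht.le)
      have h3 : s^3*(F 0 * F 1) =
          -(((B.1-A.1)*(D.2-A.2) - (B.2-A.2)*(D.1-A.1))^2 * s *
            ((ga*(1-t)+de*s)*(be*(1-s)+(1-be-ga-de)*t))) := by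
        linear_combination (s^2*F 1)*hF0
          + (((B.1-A.1)*(D.2-A.2)-(B.2-A.2)*(D.1-A.1))*(ga*(1-t)+de*s))*hF1
      have hprod : F 0 * F 1 ≤ 0 := by
        have h4 : 0 ≤ ((B.1-A.1)*(D.2-A.2) - (B.2-A.2)*(D.1-A.1))^2 * s *
            ((ga*(1-t)+de*s)*(be*(1-s)+(1-be-ga-de)*t)) :=
          mul_nonneg (mul_nonneg (sq_nonneg _) hs.le) (mul_nonneg hc0 hc1n)
        have h5 : s^3 * (F 0 * F 1) ≤ 0 := by rw [h3]; exact neg_nonpos.mpr h4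
        exact nonpos_of_mul_nonpos_right h5 (pow_pos hs 3)
      have h0m : (0:ℝ) ∈ Set.uIcc (F 0) (F 1) := by
        rcases mul_nonpos_iff.mp hprod with ⟨h1, h2⟩ | ⟨h1, h2⟩
        · exact Set.mem_uIcc.mpr (Or.inr ⟨h2, h1⟩)
        · exact Set.mem_uIcc.mpr (Or.inl ⟨h1, h2⟩)
      obtain ⟨x, hxmem, hFx⟩ := intermediate_value_uIcc hFcont h0m
      rw [Set.uIcc_of_le (zero_le_one)] at hxmem
      obtain ⟨hx0, hx1⟩ := Set.mem_Icc.mp hxmem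
      have hFx' : ((1-x)*(B.1-A.1) + x*(C.1-D.1)) * (p.2 - ((1-x)*A.2 + x*D.2)) -
          ((1-x)*(B.2-A.2) + x*(C.2-D.2)) * (p.1 - ((1-x)*A.1 + x*D.1)) = 0 := by
        have h := hFx
        simp only [hFdef] at h
        exact h
      have hrho : 0 < (1-x)*s + x*t := interp_pos hx0 hx1 hs ht
      have hsig : 0 < (1-x)*(1-t) + x*(1-s) :=
        interp_pos hx0 hx1 (by linarith) (by linarith)
      set num : ℝ := (p.1 - ((1-x)*A.1+x*D.1))*(D.2-A.2) - (p.2 - ((1-x)*A.2+x*D.2))*(D.1-A.1)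
        with hnum_def
      set den : ℝ := ((1-x)*(B.1-A.1)+x*(C.1-D.1))*(D.2-A.2) -
        ((1-x)*(B.2-A.2)+x*(C.2-D.2))*(D.1-A.1) with hden_def
      have hden : s * den = ((B.1-A.1)*(D.2-A.2) - (B.2-A.2)*(D.1-A.1)) * ((1-x)*s + x*t) := by
        rw [hden_def]
        linear_combination (x*(D.2-A.2))*hE1 - (x*(D.1-A.1))*hE2
      have hnum : s * num = ((B.1-A.1)*(D.2-A.2) - (B.2-A.2)*(D.1-A.1)) * (be*s + ga*t) := by
        rw [hnum_def]
        linear_combination ((D.2-A.2)*s)*hp1 + ((D.2-A.2)*ga)*hE1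
          - ((D.1-A.1)*s)*hp2 - ((D.1-A.1)*ga)*hE2
      have hden0 : den ≠ 0 := by
        intro h
        have h' : ((B.1-A.1)*(D.2-A.2) - (B.2-A.2)*(D.1-A.1)) * ((1-x)*s + x*t) = 0 := by
          rw [← hden, h, mul_zero]
        rcases mul_eq_zero.mp h' with h'' | h''
        · exact hk h''
        · linarith
      have hPsi : ((B.1-A.1)*(D.2-A.2) - (B.2-A.2)*(D.1-A.1)) *
          (x*(1-t-s)*(s*be+ga*t) - ((1-x)*s+x*t)*(ga*(1-t)+s*de-s*x)) = 0 := by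
        linear_combination (-(s^2))*hFx'
          + (s*(x*(1-t-s)*(D.1-A.1)+((1-x)*s+x*t)*(B.1-A.1)))*hp2
          - (s*(x*(1-t-s)*(D.2-A.2)+((1-x)*s+x*t)*(B.2-A.2)))*hp1
          + (ga*(x*(1-t-s)*(D.1-A.1)+((1-x)*s+x*t)*(B.1-A.1)))*hE2
          - (ga*(x*(1-t-s)*(D.2-A.2)+((1-x)*s+x*t)*(B.2-A.2)))*hE1
          + (x*(s*(p.2-A.2-x*(D.2-A.2))))*hE1
          - (x*(s*(p.1-A.1-x*(D.1-A.1))))*hE2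
      have hPsi0 : x*(1-t-s)*(s*be+ga*t) - ((1-x)*s+x*t)*(ga*(1-t)+s*de-s*x) = 0 := by
        rcases mul_eq_zero.mp hPsi with h | h
        · exact absurd h hk
        · exact h
      have hkey : s*(((1-x)*(1-t)+x*(1-s)) * (((1-x)*s+x*t) - (be*s+ga*t)))
          = s*(((1-x)*s+x*t) * ((1-be-ga-de)*(1-t) + de*(1-s))) := by
        linear_combination (t-s)*hPsi0
      have hkey' : ((1-x)*(1-t)+x*(1-s)) * (((1-x)*s+x*t) - (be*s+ga*t))
          = ((1-x)*s+x*t) * ((1-be-ga-de)*(1-t) + de*(1-s)) :=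
        mul_left_cancel₀ (ne_of_gt hs) hkey
      have h9 : 0 ≤ ((1-x)*s+x*t) - (be*s+ga*t) := by
        have hn : 0 ≤ (1-be-ga-de)*(1-t) + de*(1-s) :=
          add_nonneg (mul_nonneg hal (by linarith)) (mul_nonneg hde (by linarith))
        by_contra hcon
        push_neg at hcon
        have hneg : ((1-x)*(1-t)+x*(1-s)) * (((1-x)*s+x*t) - (be*s+ga*t)) < 0 :=
          mul_neg_of_pos_of_neg hsig hcon
        rw [hkey'] at hneg
        exact absurd hneg (not_lt.mpr (mul_nonneg hrho.le hn))
      have h6 : s^2*(num*den) = ((B.1-A.1)*(D.2-A.2) - (B.2-A.2)*(D.1-A.1))^2 *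
          (((1-x)*s+x*t)*(be*s+ga*t)) := by
        linear_combination (s*den)*hnum
          + (((B.1-A.1)*(D.2-A.2)-(B.2-A.2)*(D.1-A.1))*(be*s+ga*t))*hden
      have hnd : 0 ≤ num*den := by
        have h7 : 0 ≤ ((B.1-A.1)*(D.2-A.2) - (B.2-A.2)*(D.1-A.1))^2 *
            (((1-x)*s+x*t)*(be*s+ga*t)) :=
          mul_nonneg (sq_nonneg _) (mul_nonneg hrho.le
            (add_nonneg (mul_nonneg hbe hs.le) (mul_nonneg hga ht.le)))
        exact (mul_nonneg_iff_of_pos_left (pow_pos hs 2)).mp (by rw [h6]; exact h7)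
      have h8 : s^2*((den-num)*den) = ((B.1-A.1)*(D.2-A.2) - (B.2-A.2)*(D.1-A.1))^2 *
          (((1-x)*s+x*t)*(((1-x)*s+x*t) - (be*s+ga*t))) := by
        linear_combination (s*den + ((B.1-A.1)*(D.2-A.2)-(B.2-A.2)*(D.1-A.1))*((1-x)*s+x*t)
          - ((B.1-A.1)*(D.2-A.2)-(B.2-A.2)*(D.1-A.1))*(be*s+ga*t))*hden - (s*den)*hnum
      have hdnd : 0 ≤ (den-num)*den := by
        have h7 : 0 ≤ ((B.1-A.1)*(D.2-A.2) - (B.2-A.2)*(D.1-A.1))^2 *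
            (((1-x)*s+x*t)*(((1-x)*s+x*t) - (be*s+ga*t))) :=
          mul_nonneg (sq_nonneg _) (mul_nonneg hrho.le h9)
        exact (mul_nonneg_iff_of_pos_left (pow_pos hs 2)).mp (by rw [h8]; exact h7)
      have hl0 : 0 ≤ num/den := by
        have h10 : num/den = (num*den)/den^2 := by
          rw [pow_two]
          rw [div_eq_div_iff hden0 (mul_ne_zero hden0 hden0)]
          ring
        rw [h10]
        exact div_nonneg hnd (sq_nonneg den)
      have hl1 : num/den ≤ 1 := by
        have h10 : 1 - num/den = ((den-num)*den)/den^2 := by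
          field_simp
        have h11 : 0 ≤ 1 - num/den := by
          rw [h10]
          exact div_nonneg hdnd (sq_nonneg den)
        linarith
      have hr1q : (p.1 - ((1-x)*A.1+x*D.1)) * den = ((1-x)*(B.1-A.1)+x*(C.1-D.1)) * num := by
        rw [hnum_def, hden_def]
        linear_combination (D.1-A.1)*hFx'
      have hr2q : (p.2 - ((1-x)*A.2+x*D.2)) * den = ((1-x)*(B.2-A.2)+x*(C.2-D.2)) * num := by
        rw [hnum_def, hden_def]
        linear_combination (D.2-A.2)*hFx'
      refine ⟨(x, num/den), Set.mem_prod.mpr ⟨Set.mem_Icc.mpr ⟨hx0, hx1⟩,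
        Set.mem_Icc.mpr ⟨hl0, hl1⟩⟩, ?_⟩
      rw [hφ]
      have hcmp1 : (1 - num/den)*((1-x)*A.1 + x*D.1) + (num/den)*((1-x)*B.1 + x*C.1) = p.1 := by
        have h12 : (num/den) * (((1-x)*(B.1-A.1)+x*(C.1-D.1))) = p.1 - ((1-x)*A.1+x*D.1) := by
          rw [div_mul_eq_mul_div, div_eq_iff hden0]
          linear_combination -hr1q
        linear_combination h12
      have hcmp2 : (1 - num/den)*((1-x)*A.2 + x*D.2) + (num/den)*((1-x)*B.2 + x*C.2) = p.2 := by
        have h12 : (num/den) * (((1-x)*(B.2-A.2)+x*(C.2-D.2))) = p.2 - ((1-x)*A.2+x*D.2) := by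
          rw [div_mul_eq_mul_div, div_eq_iff hden0]
          linear_combination -hr2q
        linear_combination h12
      apply Prod.ext
      · simpa only [Prod.fst_add, Prod.smul_fst, smul_eq_mul] using hcmp1
      · simpa only [Prod.snd_add, Prod.smul_snd, smul_eq_mul] using hcmp2
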